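/- Let n ≥ 1, let k_1, …, k_n be pairwise distinct strictly positive real numbers, and let y_0 < 0. Then the function g(x) := (∏_{i=1}^n k_i) / (−x · ∏_{i=1}^n (k_i − x)) is integrable on (−∞, y_0), and ∫_{−∞}^{y_0} g(x) dx = ∑_{i=1}^n [(∏_{j≠i} k_j) / (∏_{j≠i} (k_j − k_i))] · ln(1 + k_i/(−y_0)). -/

import Mathlib

open Finset MeasureTheory

theorem lagrange_key_aux (n : ℕ) (hn : 1 ≤ n) (k : Fin n → ℝ) (hinj : Function.Injective k)
    (t : ℝ) :
    ∑ i, ∏ j ∈ Finset.univ.erase i, ((k j + t) / (k j - k i)) = 1 := by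
  have : Nonempty (Fin n) := Fin.pos_iff_nonempty.mp hn
  have h := Lagrange.sum_basis (s := (univ : Finset (Fin n))) (v := k) hinj.injOn univ_nonempty
  have h2 := congrArg (Polynomial.eval (-t)) h
  simp only [Polynomial.eval_finset_sum, Polynomial.eval_one, Lagrange.basis,
    Lagrange.basisDivisor, Polynomial.eval_prod, Polynomial.eval_mul, Polynomial.eval_C,
    Polynomial.eval_sub, Polynomial.eval_X] at h2
  rw [← h2]
  refine Finset.sum_congr rfl fun i _ => Finset.prod_congr rfl fun j hj => ?_
  have hne : k i - k j ≠ 0 := sub_ne_zero.mpr (fun hkk => (mem_erase.mp hj).1 (hinj hkk.symm))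
  rw [inv_mul_eq_div, div_eq_div_iff (sub_ne_zero.mpr ?_) hne]
  · ring
  · exact fun hkk => (mem_erase.mp hj).1 (hinj hkk)

theorem partial_frac_aux (n : ℕ) (hn : 1 ≤ n) (k : Fin n → ℝ) (hk : ∀ i, 0 < k i)
    (hinj : Function.Injective k) (t : ℝ) (ht : 0 < t) :
    ∑ i, ((∏ j ∈ Finset.univ.erase i, k j) / (∏ j ∈ Finset.univ.erase i, (k j - k i))) *
      (k i / (t * (k i + t))) = (∏ i, k i) / (t * ∏ i, (k i + t)) := by
  have hkt : ∀ i, (0:ℝ) < k i + t := fun i => add_pos (hk i) ht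
  have hQ : (0:ℝ) < ∏ i, (k i + t) := Finset.prod_pos (fun i _ => hkt i)
  have key := lagrange_key_aux n hn k hinj t
  have step : ∀ i : Fin n,
      ((∏ j ∈ Finset.univ.erase i, k j) / (∏ j ∈ Finset.univ.erase i, (k j - k i))) *
        (k i / (t * (k i + t)))
      = ((∏ i, k i) / (t * ∏ i, (k i + t))) *
          ∏ j ∈ Finset.univ.erase i, ((k j + t) / (k j - k i)) := by
    intro i
    have hE : (∏ j ∈ Finset.univ.erase i, (k j - k i)) ≠ 0 := by
      refine Finset.prod_ne_zero_iff.mpr fun j hj => sub_ne_zero.mpr ?_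
      exact fun hkk => (mem_erase.mp hj).1 (hinj hkk)
    have hP : k i * ∏ j ∈ Finset.univ.erase i, k j = ∏ i, k i :=
      Finset.mul_prod_erase univ k (mem_univ i)
    have hQi : (k i + t) * ∏ j ∈ Finset.univ.erase i, (k j + t) = ∏ i, (k i + t) :=
      Finset.mul_prod_erase univ (fun j => k j + t) (mem_univ i)
    rw [Finset.prod_div_distrib, ← hP, ← hQi, div_mul_div_comm, div_mul_div_comm,
      div_eq_div_iff (mul_ne_zero hE (mul_ne_zero ht.ne' (hkt i).ne'))
        (mul_ne_zero (mul_ne_zero ht.ne' (mul_ne_zero (hkt i).ne'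
          (Finset.prod_pos (fun j _ => hkt j)).ne')) hE)]
    ring
  rw [Finset.sum_congr rfl (fun i _ => step i), ← Finset.mul_sum, key, mul_one]

theorem integral_neg_tail (n : ℕ) (hn : 1 ≤ n) (k : Fin n → ℝ) (hk : ∀ i, 0 < k i)
    (hinj : Function.Injective k) (y₀ : ℝ) (hy₀ : y₀ < 0) :
    IntegrableOn (fun x : ℝ => (∏ i, k i) / (-x * ∏ i, (k i - x))) (Set.Iio y₀) ∧
    ∫ x in Set.Iio y₀, (∏ i, k i) / (-x * ∏ i, (k i - x)) =
      ∑ i, ((∏ j ∈ Finset.univ.erase i, k j) / (∏ j ∈ Finset.univ.erase i, (k j - k i))) *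
        Real.log (1 + k i / (-y₀)) := by
  set a : ℝ := -y₀ with ha
  have ha0 : 0 < a := neg_pos.mpr hy₀
  set A : Fin n → ℝ := fun i =>
    (∏ j ∈ Finset.univ.erase i, k j) / (∏ j ∈ Finset.univ.erase i, (k j - k i)) with hA
  set h : ℝ → ℝ := fun t => (∏ i, k i) / (t * ∏ i, (k i + t)) with hh
  set G : ℝ → ℝ := fun t => -∑ i, A i * Real.log (1 + k i / t) with hG
  -- derivative of G is h on Ici a
  have hderiv : ∀ t ∈ Set.Ici a, HasDerivAt G (h t) t := by
    intro t ht
    have ht0 : 0 < t := lt_of_lt_of_le ha0 ht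
    have hterm : ∀ i : Fin n, HasDerivAt (fun t => A i * Real.log (1 + k i / t))
        (-(A i * (k i / (t * (k i + t))))) t := by
      intro i
      have hu : HasDerivAt (fun t : ℝ => 1 + k i / t) (k i * -(t ^ 2)⁻¹) t := by
        simpa [div_eq_mul_inv] using ((hasDerivAt_inv ht0.ne').const_mul (k i)).const_add 1
      have hki : 0 < k i := hk i
      have hupos : (0:ℝ) < 1 + k i / t := by
        have := div_pos hki ht0; linarith
      have hlog := (Real.hasDerivAt_log hupos.ne').comp t hu
      have := hlog.const_mul (A i)
      have h1 : (1 + k i / t)⁻¹ * (k i * -(t ^ 2)⁻¹) = -(k i / (t * (k i + t))) := by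
        have h0 : t * (k i + t) ≠ 0 := (mul_pos ht0 (add_pos hki ht0)).ne'
        have h3 : (0:ℝ) < t ^ 2 * k i + t ^ 3 := by positivity
        field_simp [h3.ne']
        ring
      exact this.congr_deriv (by rw [h1]; ring)
    have hsum := HasDerivAt.sum (u := univ)
      (fun i _ => hterm i)
    have := hsum.neg
    convert this using 1
    · rfl
    · rfl
    · ext x
      simp [hG, Finset.sum_apply]
    rw [Finset.sum_neg_distrib, neg_neg]
    exact (partial_frac_aux n hn k hk hinj t ht0).symm
  -- G tends to 0 at top
  have htend : Filter.Tendsto G Filter.atTop (nhds 0) := by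
    have : Filter.Tendsto (fun t : ℝ => ∑ i, A i * Real.log (1 + k i / t))
        Filter.atTop (nhds (∑ i : Fin n, 0)) := by
      refine tendsto_finset_sum _ fun i _ => ?_
      have h1 : Filter.Tendsto (fun t : ℝ => 1 + k i / t) Filter.atTop (nhds 1) := by
        have := (Filter.Tendsto.div_atTop (tendsto_const_nhds (x := k i)) Filter.tendsto_id)
        simpa using tendsto_const_nhds.add this
      have h2 : Filter.Tendsto (fun t : ℝ => Real.log (1 + k i / t)) Filter.atTop (nhds 0) := by
        have := ((Real.continuousAt_log one_ne_zero).tendsto).comp h1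
        simpa [Function.comp_def] using this
      simpa using h2.const_mul (A i)
    simpa using this.neg
  have hpos : ∀ t ∈ Set.Ioi a, 0 ≤ h t := by
    intro t ht
    have ht0 : 0 < t := ha0.trans ht
    have h2 : (0:ℝ) < ∏ i, (k i + t) := Finset.prod_pos fun i _ => add_pos (hk i) ht0
    exact div_nonneg (Finset.prod_nonneg fun i _ => (hk i).le)
      (mul_nonneg ht0.le h2.le)
  have htend0 : Filter.Tendsto G Filter.atTop (nhds 0) := htend
  have hint : IntegrableOn h (Set.Ioi a) :=
    integrableOn_Ioi_deriv_of_nonneg' hderiv hpos htend0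
  have hval : ∫ t in Set.Ioi a, h t = 0 - G a :=
    integral_Ioi_of_hasDerivAt_of_nonneg' hderiv hpos htend0
  -- transfer to Iio y₀
  have hfun : (fun x : ℝ => (∏ i, k i) / (-x * ∏ i, (k i - x))) = fun x => h (-x) := by
    funext x
    simp only [hh, sub_eq_add_neg]
  have hset : (Neg.neg ⁻¹' Set.Ioi a : Set ℝ) = Set.Iio y₀ := by
    ext x
    simp only [Set.mem_preimage, Set.mem_Ioi, Set.mem_Iio, ha]
    constructor <;> intro <;> linarith
  have hmeas : (volume : Measure ℝ).restrict (Set.Ioi a)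
      = ((volume : Measure ℝ).restrict (Set.Iio y₀)).map (fun x : ℝ => -x) := by
    conv_lhs => rw [← Measure.map_neg_eq_self (volume : Measure ℝ)]
    rw [Measure.restrict_map measurable_neg measurableSet_Ioi]
    exact congrArg _ (congrArg _ hset)
  have hemb : MeasurableEmbedding (fun x : ℝ => -x) :=
    (Homeomorph.neg ℝ).isClosedEmbedding.measurableEmbedding
  constructor
  · rw [hfun]
    have : Integrable h (((volume : Measure ℝ).restrict (Set.Iio y₀)).map (fun x : ℝ => -x)) := by
      rw [← hmeas]; exact hint
    exact hemb.integrable_map_iff.mp this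
  · rw [hfun, ← integral_Iic_eq_integral_Iio, integral_comp_neg_Iic, ← ha, hval]
    simp [hG, hA]
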